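/- With notation as follows: Z1=[-1,0,1], Z2=[0,-1,1], Z3=[1,0,1], Z4=[0,1,1], Z5=[0,0,1], Z6=[1,-1,0], Z7=[1,1,0], Z8=[0,1,0], Z9=[1,0,0], P=[a,b,c], L1=y, L2=x, L3=z, and M_j the linear form defining the line through P and Z_j (e.g., M_j(x,y,z) = det of the 3x3 matrix with rows (x,y,z), (a,b,c), Z_j). Define G1 = L1·L2·M6·M7, G2 = L1·L3·M2·M4, G3 = L2·L3·M1·M3. Then the determinant of the 3x3 matrix whose columns are ((Gi)_{xx}(P), (Gi)_{xy}(P), (Gi)_{yy}(P)) for i=1,2,3 is identically zero as a polynomial in a, b, c. -/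

import Mathlib

open MvPolynomial

noncomputable section

/-- The linear form cutting out the line through `P = [a,b,c]` and the point `p`,
namely the determinant of the matrix with rows `(x,y,z)`, `(a,b,c)`, `p`. -/
def Mform (a b c : ℂ) (p : Fin 3 → ℂ) : MvPolynomial (Fin 3) ℂ :=
  C (b * p 2 - c * p 1) * X 0 - C (a * p 2 - c * p 0) * X 1 + C (a * p 1 - b * p 0) * X 2

/-- `G₁ = L₁·L₂·M₆·M₇` with `L₁ = y`, `L₂ = x`. -/
def G1 (a b c : ℂ) : MvPolynomial (Fin 3) ℂ :=
  X 1 * X 0 * Mform a b c ![1, -1, 0] * Mform a b c ![1, 1, 0]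

/-- `G₂ = L₁·L₃·M₂·M₄` with `L₁ = y`, `L₃ = z`. -/
def G2 (a b c : ℂ) : MvPolynomial (Fin 3) ℂ :=
  X 1 * X 2 * Mform a b c ![0, -1, 1] * Mform a b c ![0, 1, 1]

/-- `G₃ = L₂·L₃·M₁·M₃` with `L₂ = x`, `L₃ = z`. -/
def G3 (a b c : ℂ) : MvPolynomial (Fin 3) ℂ :=
  X 0 * X 2 * Mform a b c ![-1, 0, 1] * Mform a b c ![1, 0, 1]

set_option maxHeartbeats 4000000 in
/-- The determinant of the matrix of second-order partials (in `x` and `y`) of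
`G₁, G₂, G₃` evaluated at `P = [a,b,c]` vanishes identically in `a, b, c`. -/
theorem stmt6 :
    ∀ a b c : ℂ,
      Matrix.det (Matrix.of
        ![![eval ![a,b,c] (pderiv 0 (pderiv 0 (G1 a b c))),
            eval ![a,b,c] (pderiv 0 (pderiv 0 (G2 a b c))),
            eval ![a,b,c] (pderiv 0 (pderiv 0 (G3 a b c)))],
          ![eval ![a,b,c] (pderiv 0 (pderiv 1 (G1 a b c))),
            eval ![a,b,c] (pderiv 0 (pderiv 1 (G2 a b c))),
            eval ![a,b,c] (pderiv 0 (pderiv 1 (G3 a b c)))],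
          ![eval ![a,b,c] (pderiv 1 (pderiv 1 (G1 a b c))),
            eval ![a,b,c] (pderiv 1 (pderiv 1 (G2 a b c))),
            eval ![a,b,c] (pderiv 1 (pderiv 1 (G3 a b c)))]]) = 0 := by
  intro a b c
  simp only [G1, G2, G3, Mform, Matrix.det_fin_three, Matrix.of_apply,
    Matrix.cons_val', Matrix.cons_val_zero, Matrix.cons_val_one, Matrix.head_cons,
    Matrix.empty_val', Matrix.cons_val_fin_one, Matrix.head_fin_const,
    Matrix.cons_val_two, Matrix.tail_cons,
    map_add, map_sub, map_mul, pderiv_C, pderiv_X, eval_add, eval_sub, eval_mul,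
    eval_C, eval_X, Pi.single_apply]
  norm_num
  simp [Pi.single_apply, Matrix.cons_val]
  ring
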